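/- In the tree τ_f coded by f, with root ρ = [m]_f and genealogical order σ₁ ⪯ σ₂ iff σ₁ lies on the geodesic from ρ to σ₂, one has: for σᵢ = [tᵢ]_f, σ₁ ⪯ σ₂ if and only if m_f(t₁,t₂) = f(t₁). -/
import Mathlib


open Set

/-- `m_f(s,t) = inf_{r ∈ [min s t, max s t]} f(r)`. -/
noncomputable def treeMinf (f : ℝ → ℝ) (s t : ℝ) : ℝ :=
  sInf (f '' Icc (min s t) (max s t))

/-- `d_f(s,t) = f(s) + f(t) - 2 m_f(s,t)`. -/
noncomputable def treeDist (f : ℝ → ℝ) (s t : ℝ) : ℝ :=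
  f s + f t - 2 * treeMinf f s t

lemma treeMinf_root (f : ℝ → ℝ) (m : ℝ) (hpos : ∀ x ∈ Icc 0 m, 0 ≤ f x)
    (hfm : f m = 0) (t : ℝ) (ht : t ∈ Icc 0 m) : treeMinf f m t = 0 := by
  obtain ⟨ht0, htm⟩ := ht
  have hmin : min m t = t := min_eq_right htm
  have hmax : max m t = m := max_eq_left htm
  unfold treeMinf
  rw [hmin, hmax]
  have hlb : ∀ y ∈ f '' Icc t m, 0 ≤ y := by
    rintro y ⟨x, hx, rfl⟩
    exact hpos x ⟨ht0.trans hx.1, hx.2⟩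
  apply le_antisymm
  · calc sInf (f '' Icc t m) ≤ f m :=
        csInf_le ⟨0, fun y hy => hlb y hy⟩ ⟨m, ⟨htm, le_refl m⟩, rfl⟩
      _ = 0 := hfm
  · exact le_csInf ⟨f m, ⟨m, ⟨htm, le_refl m⟩, rfl⟩⟩ hlb

/-- In the tree coded by `f`, rooted at `ρ = [m]_f`, the class `[t₁]_f` lies on the geodesic
from the root to `[t₂]_f` (equivalently, `d_f(m,t₁) + d_f(t₁,t₂) = d_f(m,t₂)`, the metric
characterization of `σ₁ ⪯ σ₂` in a real tree) if and only if `m_f(t₁,t₂) = f(t₁)`. -/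
theorem treeDist_genealogical_order (f : ℝ → ℝ) (m : ℝ) (hm : 0 ≤ m)
    (hpos : ∀ x ∈ Icc 0 m, 0 ≤ f x) (hfm : f m = 0)
    (hattain : ∀ a b : ℝ, 0 ≤ a → a ≤ b → b ≤ m →
      ∃ r ∈ Icc a b, ∀ x ∈ Icc a b, f r ≤ f x)
    (t₁ : ℝ) (ht₁ : t₁ ∈ Icc 0 m) (t₂ : ℝ) (ht₂ : t₂ ∈ Icc 0 m) :
    (treeDist f m t₁ + treeDist f t₁ t₂ = treeDist f m t₂) ↔ treeMinf f t₁ t₂ = f t₁ := by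
  have h1 := treeMinf_root f m hpos hfm t₁ ht₁
  have h2 := treeMinf_root f m hpos hfm t₂ ht₂
  unfold treeDist
  rw [h1, h2, hfm]
  constructor <;> intro h <;> linarith
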